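/- For any a > 0 and continuous even function h with h(y)/y² integrable near 0, the double integral identity ∫₀ᵃ (1/√(a²−t²)) · (∫₀ᵗ 2t·h(s)/(s²·√(t²−s²)) ds) dt = π·∫₀ᵃ h(s)/s² ds holds; in particular, with H(t) = ∫_{-t}^{t} t·h(y)/(y²·√(t²−y²)) dy, one has ∫₀ᵃ H(t)/√(a²−t²) dt = π·∫₀ᵃ h(s)/s² ds. -/

import Mathlib

open MeasureTheory intervalIntegral Real Set

/-- The kernel `2t / (√(t²-s²) √(a²-t²))`. -/
noncomputable def bkern (s a t : ℝ) : ℝ := 2 * t / (Real.sqrt (t ^ 2 - s ^ 2) * Real.sqrt (a ^ 2 - t ^ 2))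

lemma bkern_meas (s a : ℝ) : Measurable (bkern s a) := by
  unfold bkern
  fun_prop

lemma bkern_nonneg {s a : ℝ} {t : ℝ} (ht : 0 ≤ t) : 0 ≤ bkern s a t := by
  unfold bkern
  positivity

lemma bkern_zero {s a t : ℝ} (ht : 0 < t) (hts : t ≤ s) : bkern s a t = 0 := by
  unfold bkern
  rw [Real.sqrt_eq_zero'.mpr (by nlinarith : t ^ 2 - s ^ 2 ≤ 0)]
  simp

lemma sqrt_sub_integrable {s m : ℝ} :
    IntervalIntegrable (fun t : ℝ => (t - s) ^ (-(1/2) : ℝ)) volume s m := by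
  have h := (intervalIntegrable_rpow' (a := 0) (b := m - s) (r := -(1/2))
    (by norm_num)).comp_sub_right s
  simpa using h

lemma sqrt_sub_integrable' {m a : ℝ} :
    IntervalIntegrable (fun t : ℝ => (a - t) ^ (-(1/2) : ℝ)) volume m a := by
  have h := (intervalIntegrable_rpow' (a := 0) (b := a - m) (r := -(1/2))
    (by norm_num)).comp_sub_left a
  simpa using h.symm

lemma rpow_half_inv {x : ℝ} (hx : 0 ≤ x) : x ^ (-(1/2) : ℝ) = (Real.sqrt x)⁻¹ := by
  rw [Real.sqrt_eq_rpow, ← Real.rpow_neg hx]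

lemma bkern_integrableOn {s a : ℝ} (hs : 0 < s) (hsa : s < a) :
    IntegrableOn (bkern s a) (Set.Ioc s a) := by
  set m : ℝ := (s + a) / 2 with hm
  have hsm : s < m := by rw [hm]; linarith
  have hma : m < a := by rw [hm]; linarith
  have hm0 : 0 < m := by linarith
  have h1 : IntegrableOn (bkern s a) (Set.Ioc s m) := by
    set C1 : ℝ := 2 * a / (Real.sqrt (2 * s) * Real.sqrt (a ^ 2 - m ^ 2)) with hC1
    have hC1pos : 0 < C1 := by
      apply div_pos (by linarith)
      apply mul_pos (Real.sqrt_pos.mpr (by linarith)) (Real.sqrt_pos.mpr (by nlinarith))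
    have hg : IntegrableOn (fun t : ℝ => C1 * (t - s) ^ (-(1/2) : ℝ)) (Set.Ioc s m) := by
      rw [← intervalIntegrable_iff_integrableOn_Ioc_of_le hsm.le]
      exact sqrt_sub_integrable.const_mul C1
    refine MeasureTheory.Integrable.mono hg ((bkern_meas s a).aestronglyMeasurable) ?_
    rw [ae_restrict_iff' measurableSet_Ioc]
    filter_upwards with t ht
    obtain ⟨ht1, ht2⟩ := ht
    have hts : 0 < t - s := by linarith
    have hsq : Real.sqrt (t ^ 2 - s ^ 2) = Real.sqrt (t - s) * Real.sqrt (t + s) := by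
      rw [← Real.sqrt_mul hts.le]; ring_nf
    have hb1 : Real.sqrt (2 * s) ≤ Real.sqrt (t + s) := Real.sqrt_le_sqrt (by linarith)
    have hb2 : Real.sqrt (a ^ 2 - m ^ 2) ≤ Real.sqrt (a ^ 2 - t ^ 2) :=
      Real.sqrt_le_sqrt (by nlinarith)
    have hD' : 0 < Real.sqrt (t - s) * (Real.sqrt (2 * s) * Real.sqrt (a ^ 2 - m ^ 2)) := by
      apply mul_pos (Real.sqrt_pos.mpr hts)
      apply mul_pos (Real.sqrt_pos.mpr (by linarith)) (Real.sqrt_pos.mpr (by nlinarith))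
    have key : bkern s a t ≤ C1 * (t - s) ^ (-(1/2) : ℝ) := by
      have : bkern s a t ≤ 2 * a / (Real.sqrt (t - s) * (Real.sqrt (2 * s) * Real.sqrt (a ^ 2 - m ^ 2))) := by
        unfold bkern
        rw [hsq]
        apply div_le_div₀ (by linarith) (by linarith) hD'
        have h0 : (0:ℝ) ≤ Real.sqrt (t - s) := Real.sqrt_nonneg _
        calc Real.sqrt (t - s) * (Real.sqrt (2 * s) * Real.sqrt (a ^ 2 - m ^ 2))
            ≤ Real.sqrt (t - s) * (Real.sqrt (t + s) * Real.sqrt (a ^ 2 - t ^ 2)) := by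
              apply mul_le_mul_of_nonneg_left _ h0
              exact mul_le_mul hb1 hb2 (Real.sqrt_nonneg _) (Real.sqrt_nonneg _)
          _ = Real.sqrt (t - s) * Real.sqrt (t + s) * Real.sqrt (a ^ 2 - t ^ 2) := by ring
      rw [rpow_half_inv hts.le, hC1]
      refine this.trans (le_of_eq ?_)
      rw [div_mul_eq_mul_div, div_eq_mul_inv, div_eq_mul_inv, mul_inv]
      ring
    have hb0 : 0 ≤ bkern s a t := bkern_nonneg (by linarith)
    rw [Real.norm_of_nonneg hb0,
      Real.norm_of_nonneg (mul_nonneg hC1pos.le (Real.rpow_nonneg hts.le _))]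
    exact key
  have h2 : IntegrableOn (bkern s a) (Set.Ioc m a) := by
    rw [integrableOn_Ioc_iff_integrableOn_Ioo]
    set C2 : ℝ := 2 * a / (Real.sqrt (m ^ 2 - s ^ 2) * Real.sqrt a) with hC2
    have hg : IntegrableOn (fun t : ℝ => C2 * (a - t) ^ (-(1/2) : ℝ)) (Set.Ioo m a) := by
      rw [← integrableOn_Ioc_iff_integrableOn_Ioo,
        ← intervalIntegrable_iff_integrableOn_Ioc_of_le hma.le]
      exact sqrt_sub_integrable'.const_mul C2
    refine MeasureTheory.Integrable.mono hg ((bkern_meas s a).aestronglyMeasurable) ?_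
    rw [ae_restrict_iff' measurableSet_Ioo]
    filter_upwards with t ht
    obtain ⟨ht1, ht2⟩ := ht
    have hta : 0 < a - t := by linarith
    have hsq : Real.sqrt (a ^ 2 - t ^ 2) = Real.sqrt (a - t) * Real.sqrt (a + t) := by
      rw [← Real.sqrt_mul hta.le]; ring_nf
    have hb1 : Real.sqrt (m ^ 2 - s ^ 2) ≤ Real.sqrt (t ^ 2 - s ^ 2) :=
      Real.sqrt_le_sqrt (by nlinarith)
    have hb2 : Real.sqrt a ≤ Real.sqrt (a + t) := Real.sqrt_le_sqrt (by linarith)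
    have hD' : 0 < Real.sqrt (m ^ 2 - s ^ 2) * Real.sqrt a * Real.sqrt (a - t) := by
      apply mul_pos
      apply mul_pos (Real.sqrt_pos.mpr (by nlinarith)) (Real.sqrt_pos.mpr (by linarith))
      exact Real.sqrt_pos.mpr hta
    have key : bkern s a t ≤ C2 * (a - t) ^ (-(1/2) : ℝ) := by
      have : bkern s a t ≤ 2 * a / (Real.sqrt (m ^ 2 - s ^ 2) * Real.sqrt a * Real.sqrt (a - t)) := by
        unfold bkern
        rw [hsq]
        apply div_le_div₀ (by linarith) (by linarith) hD'
        calc Real.sqrt (m ^ 2 - s ^ 2) * Real.sqrt a * Real.sqrt (a - t)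
            ≤ Real.sqrt (t ^ 2 - s ^ 2) * Real.sqrt (a + t) * Real.sqrt (a - t) := by
              apply mul_le_mul_of_nonneg_right _ (Real.sqrt_nonneg _)
              exact mul_le_mul hb1 hb2 (Real.sqrt_nonneg _) (Real.sqrt_nonneg _)
          _ = Real.sqrt (t ^ 2 - s ^ 2) * (Real.sqrt (a - t) * Real.sqrt (a + t)) := by ring
      rw [rpow_half_inv hta.le, hC2]
      refine this.trans (le_of_eq ?_)
      rw [div_mul_eq_mul_div, div_eq_mul_inv, div_eq_mul_inv, mul_inv]
      ring
    have hb0 : 0 ≤ bkern s a t := bkern_nonneg (by linarith)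
    have hC2nn : 0 ≤ C2 := by
      apply div_nonneg (by linarith) (mul_nonneg (Real.sqrt_nonneg _) (Real.sqrt_nonneg _))
    rw [Real.norm_of_nonneg hb0,
      Real.norm_of_nonneg (mul_nonneg hC2nn (Real.rpow_nonneg hta.le _))]
    exact key
  have : Set.Ioc s a = Set.Ioc s m ∪ Set.Ioc m a := (Set.Ioc_union_Ioc_eq_Ioc hsm.le hma.le).symm
  rw [this]
  exact h1.union h2

lemma bkern_integral {s a : ℝ} (hs : 0 < s) (hsa : s < a) :
    ∫ t in s..a, bkern s a t = Real.pi := by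
  have hden : (0:ℝ) < a ^ 2 - s ^ 2 := by nlinarith
  set g : ℝ → ℝ := fun t => Real.arcsin ((2 * t ^ 2 - s ^ 2 - a ^ 2) / (a ^ 2 - s ^ 2)) with hg
  have hcont : ContinuousOn g (Set.Icc s a) := by
    apply Real.continuous_arcsin.comp_continuousOn
    fun_prop
  have hderiv : ∀ t ∈ Set.Ioo s a, HasDerivWithinAt g (bkern s a t) (Set.Ioi t) t := by
    intro t ht
    obtain ⟨ht1, ht2⟩ := ht
    have htpos : 0 < t := hs.trans ht1
    have hXd : HasDerivAt (fun u : ℝ => (2 * u ^ 2 - s ^ 2 - a ^ 2) / (a ^ 2 - s ^ 2))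
        (4 * t / (a ^ 2 - s ^ 2)) t := by
      have h1 : HasDerivAt (fun u : ℝ => 2 * u ^ 2 - s ^ 2 - a ^ 2) (4 * t) t := by
        have := (((hasDerivAt_pow 2 t).const_mul 2).sub_const (s ^ 2)).sub_const (a ^ 2)
        refine this.congr_deriv ?_
        norm_num; ring
      exact h1.div_const _
    set X : ℝ := (2 * t ^ 2 - s ^ 2 - a ^ 2) / (a ^ 2 - s ^ 2) with hX
    have hX1 : X < 1 := by rw [hX, div_lt_one hden]; nlinarith
    have hXm1 : -1 < X := by
      rw [hX, lt_div_iff₀ hden]; nlinarith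
    have harc := (Real.hasDerivAt_arcsin (ne_of_gt hXm1) (ne_of_lt hX1)).comp t hXd
    have hsq1 : 0 < t ^ 2 - s ^ 2 := by nlinarith
    have hsq2 : 0 < a ^ 2 - t ^ 2 := by nlinarith
    have hkey : Real.sqrt (1 - X ^ 2)
        = 2 * Real.sqrt (t ^ 2 - s ^ 2) * Real.sqrt (a ^ 2 - t ^ 2) / (a ^ 2 - s ^ 2) := by
      have h2 : 1 - X ^ 2
          = (2 * Real.sqrt (t ^ 2 - s ^ 2) * Real.sqrt (a ^ 2 - t ^ 2) / (a ^ 2 - s ^ 2)) ^ 2 := by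
        rw [hX]
        rw [div_pow, div_pow, mul_pow, mul_pow, Real.sq_sqrt hsq1.le, Real.sq_sqrt hsq2.le]
        field_simp
        ring
      rw [h2, Real.sqrt_sq (by positivity)]
    have heq : 1 / Real.sqrt (1 - X ^ 2) * (4 * t / (a ^ 2 - s ^ 2)) = bkern s a t := by
      rw [hkey]
      unfold bkern
      have e1 : Real.sqrt (t ^ 2 - s ^ 2) ≠ 0 := by positivity
      have e2 : Real.sqrt (a ^ 2 - t ^ 2) ≠ 0 := by positivity
      field_simp
      ring
    have : HasDerivAt g (bkern s a t) t := by
      rw [← heq]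
      exact harc
    exact this.hasDerivWithinAt
  have hint : IntervalIntegrable (bkern s a) volume s a := by
    rw [intervalIntegrable_iff_integrableOn_Ioc_of_le hsa.le]
    exact bkern_integrableOn hs hsa
  have := intervalIntegral.integral_eq_sub_of_hasDeriv_right_of_le hsa.le hcont hderiv hint
  rw [this, hg]
  have hga : (2 * a ^ 2 - s ^ 2 - a ^ 2) / (a ^ 2 - s ^ 2) = 1 := by
    field_simp; ring
  have hgs : (2 * s ^ 2 - s ^ 2 - a ^ 2) / (a ^ 2 - s ^ 2) = -1 := by
    rw [div_eq_iff (ne_of_gt hden)]; ring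
  simp only [hga, hgs, Real.arcsin_one, Real.arcsin_neg_one]
  ring

lemma setIntegral_zero_off {f : ℝ → ℝ} {U V : Set ℝ} (hU : MeasurableSet U)
    (hV : MeasurableSet V) (hVU : V ⊆ U) (h0 : ∀ x ∈ U, x ∉ V → f x = 0) :
    ∫ x in U, f x = ∫ x in V, f x := by
  have h1 : ∫ x in U, f x = ∫ x in U, V.indicator f x :=
    setIntegral_congr_fun hU (fun x hx => by
      by_cases hxV : x ∈ V
      · simp [Set.indicator_of_mem hxV]
      · simp [Set.indicator_of_notMem hxV, h0 x hx hxV])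
  rw [h1, MeasureTheory.integral_indicator hV, Measure.restrict_restrict hV,
    Set.inter_eq_self_of_subset_left hVU]

lemma bkern_integrableOn_Ioo {s a : ℝ} (hs0 : 0 < s) (hsa : s < a) :
    IntegrableOn (bkern s a) (Set.Ioo 0 a) := by
  have : Set.Ioo (0:ℝ) a = Set.Ioc 0 s ∪ Set.Ioo s a :=
    (Set.Ioc_union_Ioo_eq_Ioo hs0.le hsa).symm
  rw [this]
  apply IntegrableOn.union
  · apply (integrableOn_zero (ε' := ℝ)).congr_fun _ measurableSet_Ioc
    intro t ht
    exact (bkern_zero ht.1 ht.2).symm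
  · exact (bkern_integrableOn hs0 hsa).mono_set Set.Ioo_subset_Ioc_self

lemma bkern_setIntegral {s a : ℝ} (hs0 : 0 < s) (hsa : s < a) :
    ∫ t in Set.Ioo (0:ℝ) a, bkern s a t = Real.pi := by
  rw [setIntegral_zero_off measurableSet_Ioo measurableSet_Ioo
    (Set.Ioo_subset_Ioo hs0.le le_rfl)
    (fun t ht hts => bkern_zero ht.1 (by
      rcases lt_or_ge s t with hc | hc
      · exact absurd ⟨hc, ht.2⟩ hts
      · exact hc))]
  rw [← integral_Ioc_eq_integral_Ioo, ← intervalIntegral.integral_of_le hsa.le]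
  exact bkern_integral hs0 hsa

/-- The Abel-type double integral identity used in Lemma `lem_Besse`. -/
theorem stmt_1 (h : ℝ → ℝ) (a : ℝ) (ha : 0 < a) (hcont : Continuous h)
    (heven : ∀ y, h (-y) = h y)
    (hint : IntegrableOn (fun s => h s / s ^ 2) (Set.Ioo 0 a) volume)
    (hint2 : ∀ t ∈ Set.Ioo (0:ℝ) a, IntervalIntegrable
      (fun s => 2 * t * h s / (s ^ 2 * Real.sqrt (t ^ 2 - s ^ 2))) volume 0 t)
    (hint3 : IntervalIntegrable
      (fun t => (∫ s in (0:ℝ)..t, 2 * t * h s / (s ^ 2 * Real.sqrt (t ^ 2 - s ^ 2)))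
        / Real.sqrt (a ^ 2 - t ^ 2)) volume 0 a)
    (hint4 : IntervalIntegrable
      (fun t => (∫ y in (-t)..t, t * h y / (y ^ 2 * Real.sqrt (t ^ 2 - y ^ 2)))
        / Real.sqrt (a ^ 2 - t ^ 2)) volume 0 a) :
    ((∫ t in (0:ℝ)..a,
        (∫ s in (0:ℝ)..t, 2 * t * h s / (s ^ 2 * Real.sqrt (t ^ 2 - s ^ 2)))
          / Real.sqrt (a ^ 2 - t ^ 2))
      = Real.pi * ∫ s in (0:ℝ)..a, h s / s ^ 2) ∧
    ((∫ t in (0:ℝ)..a,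
        (∫ y in (-t)..t, t * h y / (y ^ 2 * Real.sqrt (t ^ 2 - y ^ 2)))
          / Real.sqrt (a ^ 2 - t ^ 2))
      = Real.pi * ∫ s in (0:ℝ)..a, h s / s ^ 2) := by
  -- the factored integrand
  set f : ℝ → ℝ → ℝ := fun t s => h s / s ^ 2 * bkern s a t with hf
  have hfactor : ∀ t s : ℝ,
      2 * t * h s / (s ^ 2 * Real.sqrt (t ^ 2 - s ^ 2)) / Real.sqrt (a ^ 2 - t ^ 2) = f t s := by
    intro t s
    rw [hf]
    unfold bkern
    ring
  -- measurability of the uncurried function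
  have hFmeas : Measurable (Function.uncurry f) := by
    rw [hf]
    unfold Function.uncurry bkern
    fun_prop
  -- the two restricted measures
  set μ : Measure ℝ := volume.restrict (Set.Ioo 0 a) with hμ
  -- first part: the inner integrand, extended to `Ioo 0 a`
  have hinner : ∀ t ∈ Set.Ioo (0:ℝ) a,
      (∫ s in (0:ℝ)..t, 2 * t * h s / (s ^ 2 * Real.sqrt (t ^ 2 - s ^ 2)))
        / Real.sqrt (a ^ 2 - t ^ 2) = ∫ s, f t s ∂μ := by
    intro t ht
    rw [← intervalIntegral.integral_div]
    have e1 : (fun s => 2 * t * h s / (s ^ 2 * Real.sqrt (t ^ 2 - s ^ 2))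
        / Real.sqrt (a ^ 2 - t ^ 2)) = fun s => f t s := funext fun s => hfactor t s
    rw [e1, intervalIntegral.integral_of_le ht.1.le, integral_Ioc_eq_integral_Ioo, hμ]
    refine (setIntegral_zero_off measurableSet_Ioo measurableSet_Ioo
      (Set.Ioo_subset_Ioo le_rfl ht.2.le) ?_).symm
    intro s hs hst
    have hts : t ≤ s := by
      rcases lt_or_ge s t with hc | hc
      · exact absurd ⟨hs.1, hc⟩ hst
      · exact hc
    rw [hf]
    simp [bkern_zero ht.1 hts]
  -- integrability on the product space
  have hFint : Integrable (Function.uncurry f) (μ.prod μ) := by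
    rw [integrable_prod_iff' (hFmeas.aestronglyMeasurable)]
    constructor
    · rw [hμ]
      rw [ae_restrict_iff' measurableSet_Ioo]
      filter_upwards with s hs
      exact ((bkern_integrableOn_Ioo hs.1 hs.2).const_mul (h s / s ^ 2))
    · have heq : ∀ s ∈ Set.Ioo (0:ℝ) a,
          (∫ t, ‖Function.uncurry f (t, s)‖ ∂μ) = Real.pi * ‖h s / s ^ 2‖ := by
        intro s hs
        have e2 : ∀ t ∈ Set.Ioo (0:ℝ) a,
            ‖Function.uncurry f (t, s)‖ = ‖h s / s ^ 2‖ * bkern s a t := by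
          intro t ht
          simp only [Function.uncurry, hf]
          rw [norm_mul, Real.norm_of_nonneg (bkern_nonneg ht.1.le)]
        rw [hμ, setIntegral_congr_fun measurableSet_Ioo e2,
          MeasureTheory.integral_const_mul, bkern_setIntegral hs.1 hs.2]
        ring
      refine (Integrable.congr (hint.norm.const_mul Real.pi) ?_)
      rw [hμ, Filter.eventuallyEq_iff_exists_mem]
      exact ⟨Set.Ioo 0 a, (ae_restrict_iff' measurableSet_Ioo).mpr
        (Filter.Eventually.of_forall fun s hs => hs),
        fun s hs => (heq s hs).symm⟩
  -- swap
  have hswap : ∫ t, ∫ s, f t s ∂μ ∂μ = ∫ s, ∫ t, f t s ∂μ ∂μ :=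
    MeasureTheory.integral_integral_swap hFint
  -- inner integral after the swap
  have houter : ∀ s ∈ Set.Ioo (0:ℝ) a, (∫ t, f t s ∂μ) = Real.pi * (h s / s ^ 2) := by
    intro s hs
    rw [hμ, hf]
    simp only
    rw [MeasureTheory.integral_const_mul, bkern_setIntegral hs.1 hs.2]
    ring
  -- first statement
  have main1 : (∫ t in (0:ℝ)..a,
      (∫ s in (0:ℝ)..t, 2 * t * h s / (s ^ 2 * Real.sqrt (t ^ 2 - s ^ 2)))
        / Real.sqrt (a ^ 2 - t ^ 2)) = Real.pi * ∫ s in (0:ℝ)..a, h s / s ^ 2 := by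
    rw [intervalIntegral.integral_of_le ha.le, integral_Ioc_eq_integral_Ioo]
    have e3 := setIntegral_congr_fun (μ := volume) measurableSet_Ioo hinner
    rw [e3]
    rw [show (∫ t in Set.Ioo (0:ℝ) a, ∫ s, f t s ∂μ) = ∫ t, ∫ s, f t s ∂μ ∂μ from rfl]
    rw [hswap]
    rw [show (∫ s, ∫ t, f t s ∂μ ∂μ) = ∫ s in Set.Ioo (0:ℝ) a, ∫ t, f t s ∂μ from rfl]
    rw [setIntegral_congr_fun (μ := volume) measurableSet_Ioo houter,
      MeasureTheory.integral_const_mul, ← integral_Ioc_eq_integral_Ioo,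
      ← intervalIntegral.integral_of_le ha.le]
  refine ⟨main1, ?_⟩
  -- second statement: the symmetric inner integral equals the one-sided one
  have hsym : ∀ t ∈ Set.Ioo (0:ℝ) a,
      (∫ y in (-t)..t, t * h y / (y ^ 2 * Real.sqrt (t ^ 2 - y ^ 2)))
        = ∫ s in (0:ℝ)..t, 2 * t * h s / (s ^ 2 * Real.sqrt (t ^ 2 - s ^ 2)) := by
    intro t ht
    set F : ℝ → ℝ := fun y => t * h y / (y ^ 2 * Real.sqrt (t ^ 2 - y ^ 2)) with hF
    have hFeq : (fun s => 2 * t * h s / (s ^ 2 * Real.sqrt (t ^ 2 - s ^ 2)))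
        = fun s => 2 * F s := by
      funext s; rw [hF]; ring
    have hFint1 : IntervalIntegrable F volume 0 t := by
      have h1 := (hint2 t ht).div_const 2
      have h2 : (fun s => 2 * t * h s / (s ^ 2 * Real.sqrt (t ^ 2 - s ^ 2)) / 2) = F := by
        funext s; rw [hF]; ring
      rwa [h2] at h1
    have hFneg : ∀ y, F (-y) = F y := by
      intro y; rw [hF]; simp [heven y]
    have hflip : ∫ y in (-t)..(0:ℝ), F y = ∫ y in (0:ℝ)..t, F y := by
      have := intervalIntegral.integral_comp_neg (a := (0:ℝ)) (b := t) F
      rw [neg_zero] at this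
      rw [← this]
      exact intervalIntegral.integral_congr fun y _ => (hFneg y)
    have hFint2 : IntervalIntegrable F volume (-t) 0 := by
      have h1 : IntervalIntegrable (fun y => F (-y)) volume (-0) (-t) :=
        (IntervalIntegrable.iff_comp_neg).mp hFint1
      have h2 : (fun y => F (-y)) = F := funext hFneg
      rw [h2, neg_zero] at h1
      exact h1.symm
    rw [← intervalIntegral.integral_add_adjacent_intervals hFint2 hFint1, hflip, hFeq,
      intervalIntegral.integral_const_mul]
    ring
  rw [← main1]
  rw [intervalIntegral.integral_of_le ha.le, integral_Ioc_eq_integral_Ioo,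
    intervalIntegral.integral_of_le ha.le, integral_Ioc_eq_integral_Ioo]
  refine setIntegral_congr_fun measurableSet_Ioo fun t ht => ?_
  rw [hsym t ht]
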